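/- Let N ≥ 2 be an integer, 0 < ε < 1/N, η > 0 and 0 < ν ≤ 1/16, and let R_{η,ν}(p) = (1/η)·Σ_{i=1}^N p_i log p_i − (1/ν)·Σ_{i=1}^N log p_i. Let c ∈ ℝ^N, let p be a minimizer of p ↦ ⟨p, c⟩ + R_{η,ν}(p) over the truncated simplex Δ_N^ε, let ĉ ∈ ℝ^N satisfy ĉ_i ≤ 0 for every i and ⟨ĉ, p⟩ ≥ −1, and let p⁺ be a minimizer of p' ↦ ⟨p', c + ĉ⟩ + R_{η,ν}(p') over Δ_N^ε. Then p⁺_i ≤ (1/(8ν))·p_i for every i ∈ {1, …, N}. -/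

import Mathlib

open Finset

/-- The `ε`-truncated probability simplex in `ℝ^N`. -/
def truncSimplex (N : ℕ) (ε : ℝ) : Set (Fin N → ℝ) :=
  {q | (∀ i, ε ≤ q i) ∧ ∑ i, q i = 1}

/-- The regularizer `R_{η,ν}(p) = (1/η)·∑ i, p i log (p i) − (1/ν)·∑ i, log (p i)`. -/
noncomputable def entLogBarrier (N : ℕ) (η ν : ℝ) (q : Fin N → ℝ) : ℝ :=
  (1 / η) * ∑ i, q i * Real.log (q i) - (1 / ν) * ∑ i, Real.log (q i)

lemma deriv_nonneg_of_min (f : ℝ → ℝ) (f' : ℝ) (hf : HasDerivAt f f' 0)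
    (hmin : ∀ t ∈ Set.Ioc (0:ℝ) 1, f 0 ≤ f t) : 0 ≤ f' := by
  have h1 : Filter.Tendsto (slope f 0) (nhdsWithin 0 {(0:ℝ)}ᶜ) (nhds f') :=
    hasDerivAt_iff_tendsto_slope.mp hf
  have h2 : Filter.Tendsto (slope f 0) (nhdsWithin 0 (Set.Ioi 0)) (nhds f') :=
    h1.mono_left (nhdsWithin_mono _ (fun x hx => ne_of_gt hx))
  refine ge_of_tendsto h2 ?_
  filter_upwards [Ioc_mem_nhdsGT_of_mem (by norm_num : (0:ℝ) ∈ Set.Ico (0:ℝ) 1)] with t ht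
  have : slope f 0 t = (f t - f 0) / t := by simp [slope_def_field]
  rw [this]
  exact div_nonneg (sub_nonneg.mpr (hmin t ht)) ht.1.le

lemma vi_lemma {N : ℕ} (ε η ν : ℝ) (hε : 0 < ε) (hη : 0 < η) (hν : 0 < ν)
    (d m q : Fin N → ℝ) (hm : m ∈ truncSimplex N ε) (hq : q ∈ truncSimplex N ε)
    (hmin : ∀ x ∈ truncSimplex N ε,
      (∑ i, m i * d i) + entLogBarrier N η ν m ≤ (∑ i, x i * d i) + entLogBarrier N η ν x) :
    0 ≤ ∑ i, (d i + ((1/η) * (Real.log (m i) + 1) - (1/ν) / m i)) * (q i - m i) := by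
  have hmpos : ∀ i, 0 < m i := fun i => lt_of_lt_of_le hε (hm.1 i)
  set F : ℝ → ℝ := fun t => ∑ i,
    ((m i + t * (q i - m i)) * d i
      + (1/η) * ((m i + t * (q i - m i)) * Real.log (m i + t * (q i - m i)))
      - (1/ν) * Real.log (m i + t * (q i - m i))) with hF
  have hFt : ∀ t : ℝ, F t = (∑ i, (m i + t * (q i - m i)) * d i)
      + entLogBarrier N η ν (fun i => m i + t * (q i - m i)) := by
    intro t
    simp only [hF, entLogBarrier]
    rw [Finset.sum_sub_distrib, Finset.sum_add_distrib, ← Finset.mul_sum, ← Finset.mul_sum]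
    ring
  have hder : HasDerivAt F
      (∑ i, (d i + ((1/η) * (Real.log (m i) + 1) - (1/ν) / m i)) * (q i - m i)) 0 := by
    apply HasDerivAt.fun_sum
    intro i _
    have hne : m i + (0:ℝ) * (q i - m i) ≠ 0 := by
      have := hmpos i; intro h; nlinarith
    have hg : HasDerivAt (fun t : ℝ => m i + t * (q i - m i)) (q i - m i) 0 := by
      simpa using ((hasDerivAt_id (0:ℝ)).mul_const (q i - m i)).const_add (m i)
    have hlog : HasDerivAt (fun t : ℝ => Real.log (m i + t * (q i - m i)))
        ((q i - m i) / (m i + (0:ℝ) * (q i - m i))) 0 := hg.log hne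
    have h1 : HasDerivAt (fun t : ℝ => (m i + t * (q i - m i)) * d i)
        ((q i - m i) * d i) 0 := hg.mul_const (d i)
    have h2 : HasDerivAt (fun t : ℝ =>
        (m i + t * (q i - m i)) * Real.log (m i + t * (q i - m i)))
        ((q i - m i) * Real.log (m i + (0:ℝ) * (q i - m i))
          + (m i + (0:ℝ) * (q i - m i)) * ((q i - m i) / (m i + (0:ℝ) * (q i - m i)))) 0 :=
      hg.mul hlog
    have h := (h1.fun_add (h2.const_mul (1/η))).fun_sub (hlog.const_mul (1/ν))
    convert h using 1
    have h0 : m i + (0:ℝ) * (q i - m i) = m i := by ring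
    rw [h0]
    have := (hmpos i).ne'
    field_simp
    ring
  apply deriv_nonneg_of_min F _ hder
  intro t ht
  have hmem : (fun i => m i + t * (q i - m i)) ∈ truncSimplex N ε := by
    constructor
    · intro i
      have h1 := hm.1 i; have h2 := hq.1 i
      show ε ≤ m i + t * (q i - m i)
      nlinarith [ht.1, ht.2]
    · rw [Finset.sum_add_distrib, ← Finset.mul_sum, Finset.sum_sub_distrib, hm.2, hq.2]
      ring
  have h0 : F 0 = (∑ i, m i * d i) + entLogBarrier N η ν m := by
    rw [hFt 0]
    have : (fun i => m i + (0:ℝ) * (q i - m i)) = m := by funext i; ring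
    rw [this]
    simp
  rw [h0, hFt t]
  exact hmin _ hmem

/-- **Multiplicative stability of log-barrier FTRL iterates.**
If `p` minimizes `⟨·, c⟩ + R_{η,ν}` over `Δ_N^ε`, the increment `ĉ` is componentwise nonpositive
with `⟨ĉ, p⟩ ≥ −1`, and `p⁺` minimizes `⟨·, c + ĉ⟩ + R_{η,ν}` over `Δ_N^ε`, then
`p⁺ i ≤ (1/(8ν)) · p i` for every coordinate `i`. -/
theorem log_barrier_iterate_stability {N : ℕ} (hN : 2 ≤ N)
    (ε η ν : ℝ) (hε0 : 0 < ε) (hε1 : ε < 1 / N) (hη : 0 < η)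
    (hν0 : 0 < ν) (hν1 : ν ≤ 1 / 16)
    (c chat p pplus : Fin N → ℝ)
    (hpmem : p ∈ truncSimplex N ε)
    (hpmin : ∀ q ∈ truncSimplex N ε,
      (∑ i, p i * c i) + entLogBarrier N η ν p ≤ (∑ i, q i * c i) + entLogBarrier N η ν q)
    (hchat : ∀ i, chat i ≤ 0) (hchatp : -1 ≤ ∑ i, chat i * p i)
    (hppmem : pplus ∈ truncSimplex N ε)
    (hppmin : ∀ q ∈ truncSimplex N ε,
      (∑ i, pplus i * (c i + chat i)) + entLogBarrier N η ν pplus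
        ≤ (∑ i, q i * (c i + chat i)) + entLogBarrier N η ν q) :
    ∀ i, pplus i ≤ (1 / (8 * ν)) * p i := by
  have hppos : ∀ i, 0 < p i := fun i => lt_of_lt_of_le hε0 (hpmem.1 i)
  have hqpos : ∀ i, 0 < pplus i := fun i => lt_of_lt_of_le hε0 (hppmem.1 i)
  have hA := vi_lemma ε η ν hε0 hη hν0 c p pplus hpmem hppmem hpmin
  have hB := vi_lemma ε η ν hε0 hη hν0 (fun i => c i + chat i) pplus p hppmem hpmem hppmin
  -- key combined inequality
  have hkey : ∑ i, ((1/η) * (Real.log (pplus i) - Real.log (p i))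
      + (1/ν) * (1 / p i - 1 / pplus i) + chat i) * (pplus i - p i) ≤ 0 := by
    have hsum : ∑ i, ((1/η) * (Real.log (pplus i) - Real.log (p i))
        + (1/ν) * (1 / p i - 1 / pplus i) + chat i) * (pplus i - p i)
        + ((∑ i, (c i + ((1/η) * (Real.log (p i) + 1) - (1/ν) / p i)) * (pplus i - p i))
          + ∑ i, ((c i + chat i) + ((1/η) * (Real.log (pplus i) + 1) - (1/ν) / pplus i))
            * (p i - pplus i)) = 0 := by
      rw [← Finset.sum_add_distrib, ← Finset.sum_add_distrib]
      apply Finset.sum_eq_zero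
      intro i _
      have h1 := (hppos i).ne'
      have h2 := (hqpos i).ne'
      field_simp
      ring
    linarith
  -- nonempty, argmax of ratio
  have hNpos : 0 < N := by omega
  obtain ⟨j, -, hj⟩ := Finset.exists_max_image Finset.univ (fun i => pplus i / p i)
    ⟨⟨0, hNpos⟩, Finset.mem_univ _⟩
  have hjratio : ∀ i, pplus i / p i ≤ pplus j / p j := fun i => hj i (Finset.mem_univ i)
  -- lower bound the sum termwise
  have hlb : (1/ν) * (1 / p j - 1 / pplus j) * (pplus j - p j) + ∑ i, chat i * pplus i
      ≤ ∑ i, ((1/η) * (Real.log (pplus i) - Real.log (p i))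
        + (1/ν) * (1 / p i - 1 / pplus i) + chat i) * (pplus i - p i) := by
    have : ∀ i ∈ Finset.univ,
        (if i = j then (1/ν) * (1 / p i - 1 / pplus i) * (pplus i - p i) else 0)
          + chat i * pplus i
        ≤ ((1/η) * (Real.log (pplus i) - Real.log (p i))
          + (1/ν) * (1 / p i - 1 / pplus i) + chat i) * (pplus i - p i) := by
      intro i _
      have h1η : (0:ℝ) ≤ 1/η := by positivity
      have hE : 0 ≤ (1/η) * (Real.log (pplus i) - Real.log (p i)) * (pplus i - p i) := by
        rw [mul_assoc]
        refine mul_nonneg h1η ?_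
        rcases le_total (p i) (pplus i) with h | h
        · exact mul_nonneg (sub_nonneg.mpr (Real.log_le_log (hppos i) h))
            (sub_nonneg.mpr h)
        · have hx := sub_nonpos.mpr (Real.log_le_log (hqpos i) h)
          have hy := sub_nonpos.mpr h
          nlinarith
      have hBar : 0 ≤ (1/ν) * (1 / p i - 1 / pplus i) * (pplus i - p i) := by
        have hpne := (hppos i).ne'
        have hqne := (hqpos i).ne'
        have hνne := hν0.ne'
        have e : (1/ν) * (1 / p i - 1 / pplus i) * (pplus i - p i)
            = (1/ν) * ((pplus i - p i)^2 / (p i * pplus i)) := by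
          field_simp
        rw [e]
        have h1ν : (0:ℝ) ≤ 1/ν := by positivity
        exact mul_nonneg h1ν (div_nonneg (sq_nonneg _)
          (mul_pos (hppos i) (hqpos i)).le)
      have hC : chat i * pplus i ≤ chat i * (pplus i - p i) := by
        have := hchat i
        nlinarith [hppos i]
      have hexp : ((1/η) * (Real.log (pplus i) - Real.log (p i))
          + (1/ν) * (1 / p i - 1 / pplus i) + chat i) * (pplus i - p i)
          = (1/η) * (Real.log (pplus i) - Real.log (p i)) * (pplus i - p i)
            + (1/ν) * (1 / p i - 1 / pplus i) * (pplus i - p i)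
            + chat i * (pplus i - p i) := by ring
      rw [hexp]
      rcases eq_or_ne i j with rfl | hne
      · rw [if_pos rfl]
        linarith
      · rw [if_neg hne]
        linarith
    have hsum := Finset.sum_le_sum this
    rw [Finset.sum_add_distrib, Finset.sum_ite_eq' Finset.univ j
      (fun i => (1/ν) * (1 / p i - 1 / pplus i) * (pplus i - p i))] at hsum
    simpa using hsum
  -- bound the chat sum from below
  have hchatsum : -(pplus j / p j) ≤ ∑ i, chat i * pplus i := by
    have hρ : 0 ≤ pplus j / p j := div_nonneg (hqpos j).le (hppos j).le
    have h1 : ∀ i ∈ Finset.univ, (chat i * p i) * (pplus j / p j) ≤ chat i * pplus i := by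
      intro i _
      have hpne := (hppos i).ne'
      have he : chat i * pplus i = (chat i * p i) * (pplus i / p i) := by
        field_simp [hpne]
      rw [he]
      exact mul_le_mul_of_nonpos_left (hjratio i)
        (mul_nonpos_of_nonpos_of_nonneg (hchat i) (hppos i).le)
    have h2 := Finset.sum_le_sum h1
    rw [← Finset.sum_mul] at h2
    have h3 : -(pplus j / p j) ≤ (∑ i, chat i * p i) * (pplus j / p j) := by
      nlinarith [mul_nonneg (by linarith : (0:ℝ) ≤ (∑ i, chat i * p i) + 1) hρ]
    linarith
  -- deduce the key ratio bound at j
  have hBarj : (1/ν) * (1 / p j - 1 / pplus j) * (pplus j - p j) ≤ pplus j / p j := by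
    linarith
  have hsq : (pplus j - p j)^2 ≤ ν * pplus j ^ 2 := by
    have ha := hppos j; have hb := hqpos j
    have hane := ha.ne'; have hbne := hb.ne'; have hνne := hν0.ne'
    have e : (1/ν) * (1 / p j - 1 / pplus j) * (pplus j - p j)
        = (pplus j - p j)^2 / (ν * (p j * pplus j)) := by
      field_simp
    rw [e, div_le_div_iff₀ (mul_pos hν0 (mul_pos ha hb)) ha] at hBarj
    have e2 : pplus j * (ν * (p j * pplus j)) = ν * pplus j ^ 2 * p j := by ring
    rw [e2] at hBarj
    exact le_of_mul_le_mul_right hBarj ha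
  have hmain : 3 * pplus j ≤ 4 * p j := by
    nlinarith [hqpos j, sq_nonneg (4 * (pplus j - p j) - pplus j)]
  -- conclude
  clear hA hB hkey hlb hchatsum hBarj hsq hpmin hppmin hchatp hchat
  intro i
  have hri : pplus i * p j ≤ pplus j * p i := by
    have := hjratio i
    rw [div_le_div_iff₀ (hppos i) (hppos j)] at this
    linarith
  have hmul := mul_le_mul_of_nonneg_right hmain (hppos i).le
  have hstep : pplus i * p j ≤ 2 * p i * p j := by nlinarith [hppos j, hppos i]
  have h2le : pplus i ≤ 2 * p i := le_of_mul_le_mul_right hstep (hppos j)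
  have h8 : (2:ℝ) ≤ 1 / (8 * ν) := by
    rw [le_div_iff₀ (by linarith : (0:ℝ) < 8 * ν)]
    linarith
  calc pplus i ≤ 2 * p i := h2le
    _ ≤ (1 / (8 * ν)) * p i := mul_le_mul_of_nonneg_right h8 (hppos i).le
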